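/- If H is a quasi-bialgebra and F ∈ H⊗H is a gauge transformation (invertible with (ε⊗id)(F) = (id⊗ε)(F) = 1), then H_F, defined by keeping the multiplication, unit and counit of H but setting Δ_F(h) = FΔ(h)F⁻¹ and Φ_F = (1⊗F)(id⊗Δ)(F)Φ(Δ⊗id)(F⁻¹)(F⁻¹⊗1), is again a quasi-bialgebra. -/

import Mathlib

open TensorProduct

noncomputable section

namespace QuasiHopfPaper

variable (k : Type) [Field k]
variable (H : Type) [Ring H] [Algebra k H]

/-- A quasi-bialgebra in the sense of Drinfeld. -/
structure QuasiBialgebra where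
  comul : H →ₐ[k] H ⊗[k] H
  counit : H →ₐ[k] k
  Phi : H ⊗[k] (H ⊗[k] H)
  PhiInv : H ⊗[k] (H ⊗[k] H)
  Phi_inv_mul : Phi * PhiInv = 1
  inv_Phi_mul : PhiInv * Phi = 1
  quasi_coassoc : ∀ h : H,
    Algebra.TensorProduct.map (AlgHom.id k H) comul (comul h)
      = Phi * (Algebra.TensorProduct.assoc k k k H H H)
          (Algebra.TensorProduct.map comul (AlgHom.id k H) (comul h)) * PhiInv
  counit_right : ∀ h : H,
    (Algebra.TensorProduct.rid k k H)
      (Algebra.TensorProduct.map (AlgHom.id k H) counit (comul h)) = h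
  counit_left : ∀ h : H,
    (Algebra.TensorProduct.lid k H)
      (Algebra.TensorProduct.map counit (AlgHom.id k H) (comul h)) = h
  cocycle :
    (Algebra.TensorProduct.includeRight (R := k) (A := H)
        (B := H ⊗[k] (H ⊗[k] H)) Phi)
      * (Algebra.TensorProduct.map (AlgHom.id k H)
          ((Algebra.TensorProduct.assoc k k k H H H).toAlgHom.comp
            (Algebra.TensorProduct.map comul (AlgHom.id k H))) Phi)
      * ((Algebra.TensorProduct.map (AlgHom.id k H)
            (Algebra.TensorProduct.assoc k k k H H H).toAlgHom)
          ((Algebra.TensorProduct.assoc k k k H (H ⊗[k] H) H) (Phi ⊗ₜ[k] (1 : H))))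
    = (Algebra.TensorProduct.map (AlgHom.id k H)
          (Algebra.TensorProduct.map (AlgHom.id k H) comul) Phi)
      * ((Algebra.TensorProduct.assoc k k k H H (H ⊗[k] H))
          (Algebra.TensorProduct.map comul (AlgHom.id k (H ⊗[k] H)) Phi))
  normalized :
    Algebra.TensorProduct.map (AlgHom.id k H)
      ((Algebra.TensorProduct.lid k H).toAlgHom.comp
        (Algebra.TensorProduct.map counit (AlgHom.id k H))) Phi = 1

variable {k H}

/-- The quasi-Hopf antipode axioms for `(S, α, β)` over a quasi-bialgebra. -/
structure IsAntipode (Q : QuasiBialgebra k H) (S : H →ₗ[k] H) (α β : H) : Prop where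
  anti_mul : ∀ a b : H, S (a * b) = S b * S a
  map_one : S 1 = 1
  bijective : Function.Bijective S
  left_id : ∀ h : H,
    LinearMap.mul' k H
      (TensorProduct.map S (LinearMap.mulLeft k α) (Q.comul h)) = Q.counit h • α
  right_id : ∀ h : H,
    LinearMap.mul' k H
      (TensorProduct.map (LinearMap.mulRight k β) S (Q.comul h)) = Q.counit h • β
  phi_id :
    LinearMap.mul' k H
      (TensorProduct.map (LinearMap.mulRight k β)
        ((LinearMap.mul' k H).comp (TensorProduct.map S (LinearMap.mulLeft k α)))
        Q.Phi) = 1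
  phiInv_id :
    LinearMap.mul' k H
      (TensorProduct.map ((LinearMap.mulRight k α).comp S)
        ((LinearMap.mul' k H).comp
          (TensorProduct.map LinearMap.id ((LinearMap.mulLeft k β).comp S)))
        Q.PhiInv) = 1


variable (Q : QuasiBialgebra k H)

set_option maxHeartbeats 1000000

/-- doc -/
structure LeftComoduleAlgebra (B : Type) [Ring B] [Algebra k B] where
  lambda : B →ₐ[k] H ⊗[k] B
  Phi : H ⊗[k] (H ⊗[k] B)
  PhiInv : H ⊗[k] (H ⊗[k] B)
  Phi_inv_mul : Phi * PhiInv = 1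
  inv_Phi_mul : PhiInv * Phi = 1
  coassoc : ∀ b : B,
    Algebra.TensorProduct.map (AlgHom.id k H) lambda (lambda b) * Phi
      = Phi * (Algebra.TensorProduct.assoc k k k H H B)
          (Algebra.TensorProduct.map Q.comul (AlgHom.id k B) (lambda b))
  pentagon :
    (Algebra.TensorProduct.includeRight (R := k) (A := H)
        (B := H ⊗[k] (H ⊗[k] B)) Phi)
      * (Algebra.TensorProduct.map (AlgHom.id k H)
          ((Algebra.TensorProduct.assoc k k k H H B).toAlgHom.comp
            (Algebra.TensorProduct.map Q.comul (AlgHom.id k B))) Phi)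
      * ((Algebra.TensorProduct.map (AlgHom.id k H)
            (Algebra.TensorProduct.assoc k k k H H B).toAlgHom)
          ((Algebra.TensorProduct.assoc k k k H (H ⊗[k] H) B) (Q.Phi ⊗ₜ[k] (1 : B))))
    = (Algebra.TensorProduct.map (AlgHom.id k H)
          (Algebra.TensorProduct.map (AlgHom.id k H) lambda) Phi)
      * ((Algebra.TensorProduct.assoc k k k H H (H ⊗[k] B))
          (Algebra.TensorProduct.map Q.comul (AlgHom.id k (H ⊗[k] B)) Phi))
  counit_lambda : ∀ b : B,
    (Algebra.TensorProduct.lid k B)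
      (Algebra.TensorProduct.map Q.counit (AlgHom.id k B) (lambda b)) = b
  normal_mid :
    Algebra.TensorProduct.map (AlgHom.id k H)
      ((Algebra.TensorProduct.lid k B).toAlgHom.comp
        (Algebra.TensorProduct.map Q.counit (AlgHom.id k B))) Phi = 1
  normal_left :
    (Algebra.TensorProduct.lid k (H ⊗[k] B))
      (Algebra.TensorProduct.map Q.counit (AlgHom.id k (H ⊗[k] B)) Phi) = 1

/-- A right `H`-comodule algebra over a quasi-bialgebra (Hausser–Nill). -/
structure RightComoduleAlgebra (A : Type) [Ring A] [Algebra k A] where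
  rho : A →ₐ[k] A ⊗[k] H
  Phi : A ⊗[k] (H ⊗[k] H)
  PhiInv : A ⊗[k] (H ⊗[k] H)
  Phi_inv_mul : Phi * PhiInv = 1
  inv_Phi_mul : PhiInv * Phi = 1
  coassoc : ∀ a : A,
    Phi * (Algebra.TensorProduct.assoc k k k A H H)
        (Algebra.TensorProduct.map rho (AlgHom.id k H) (rho a))
      = Algebra.TensorProduct.map (AlgHom.id k A) Q.comul (rho a) * Phi
  pentagon :
    (Algebra.TensorProduct.includeRight (R := k) (A := A)
        (B := H ⊗[k] (H ⊗[k] H)) Q.Phi)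
      * (Algebra.TensorProduct.map (AlgHom.id k A)
          ((Algebra.TensorProduct.assoc k k k H H H).toAlgHom.comp
            (Algebra.TensorProduct.map Q.comul (AlgHom.id k H))) Phi)
      * ((Algebra.TensorProduct.map (AlgHom.id k A)
            (Algebra.TensorProduct.assoc k k k H H H).toAlgHom)
          ((Algebra.TensorProduct.assoc k k k A (H ⊗[k] H) H) (Phi ⊗ₜ[k] (1 : H))))
    = (Algebra.TensorProduct.map (AlgHom.id k A)
          (Algebra.TensorProduct.map (AlgHom.id k H) Q.comul) Phi)
      * ((Algebra.TensorProduct.assoc k k k A H (H ⊗[k] H))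
          (Algebra.TensorProduct.map rho (AlgHom.id k (H ⊗[k] H)) Phi))
  counit_rho : ∀ a : A,
    (Algebra.TensorProduct.rid k k A)
      (Algebra.TensorProduct.map (AlgHom.id k A) Q.counit (rho a)) = a
  normal_mid :
    Algebra.TensorProduct.map (AlgHom.id k A)
      ((Algebra.TensorProduct.lid k H).toAlgHom.comp
        (Algebra.TensorProduct.map Q.counit (AlgHom.id k H))) Phi = 1
  normal_right :
    Algebra.TensorProduct.map (AlgHom.id k A)
      ((Algebra.TensorProduct.rid k k H).toAlgHom.comp
        (Algebra.TensorProduct.map (AlgHom.id k H) Q.counit)) Phi = 1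


section Helpers

variable {M N P Q' : Type} [AddCommGroup M] [AddCommGroup N] [AddCommGroup P]
  [AddCommGroup Q'] [Module k M] [Module k N] [Module k P] [Module k Q']

/-- Componentwise action of `M ⊗ N` on `P ⊗ Q'` coming from actions of the factors. -/
def endTensor (f : M →ₗ[k] P →ₗ[k] P) (g : N →ₗ[k] Q' →ₗ[k] Q') :
    M ⊗[k] N →ₗ[k] (P ⊗[k] Q') →ₗ[k] (P ⊗[k] Q') :=
  (TensorProduct.homTensorHomMap (RingHom.id k) P Q' P Q').comp (TensorProduct.map f g)

end Helpers

/-- A right `H`-module coalgebra: a coalgebra in the monoidal category `M_H`. -/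
structure RightModuleCoalgebra (C : Type) [AddCommGroup C] [Module k C] where
  ract : C →ₗ[k] H →ₗ[k] C
  ract_one : ∀ c : C, ract c 1 = c
  ract_mul : ∀ (c : C) (h h' : H), ract (ract c h) h' = ract c (h * h')
  comul : C →ₗ[k] C ⊗[k] C
  counit : C →ₗ[k] k
  quasi_coassoc : ∀ c : C,
    (endTensor ract.flip (endTensor ract.flip ract.flip) Q.PhiInv)
        ((TensorProduct.assoc k C C C)
          (TensorProduct.map comul LinearMap.id (comul c)))
      = TensorProduct.map LinearMap.id comul (comul c)
  comul_ract : ∀ (c : C) (h : H),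
    comul (ract c h) = (endTensor ract.flip ract.flip) (Q.comul h) (comul c)
  counit_ract : ∀ (c : C) (h : H), counit (ract c h) = counit c * Q.counit h
  counit_comul_left : ∀ c : C,
    (TensorProduct.lid k C) (TensorProduct.map counit LinearMap.id (comul c)) = c
  counit_comul_right : ∀ c : C,
    (TensorProduct.rid k C) (TensorProduct.map LinearMap.id counit (comul c)) = c

/-- A left `H`-module algebra: an algebra in the monoidal category `_H M`
(the multiplication is only quasi-associative). -/
structure LeftModuleAlgebra (A : Type) [AddCommGroup A] [Module k A] where
  act : H →ₗ[k] A →ₗ[k] A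
  act_one : ∀ a : A, act 1 a = a
  act_mul : ∀ (h h' : H) (a : A), act (h * h') a = act h (act h' a)
  mul : A →ₗ[k] A →ₗ[k] A
  one : A
  one_mul : ∀ a : A, mul one a = a
  mul_one : ∀ a : A, mul a one = a
  quasi_assoc : ∀ a a' a'' : A,
    mul (mul a a') a''
      = TensorProduct.lift mul
          ((TensorProduct.map LinearMap.id (TensorProduct.lift mul))
            ((endTensor act (endTensor act act) Q.Phi) (a ⊗ₜ[k] (a' ⊗ₜ[k] a''))))
  act_mul_distrib : ∀ (h : H) (a a' : A),
    act h (mul a a')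
      = TensorProduct.lift mul ((endTensor act act (Q.comul h)) (a ⊗ₜ[k] a'))
  act_one_elem : ∀ h : H, act h one = Q.counit h • one


section Smash

variable {A : Type} [AddCommGroup A] [Module k A]
variable {B : Type} [Ring B] [Algebra k B]

/-- The generalized smash product multiplication `A ▶< B`:
`(a ▶< b)(a' ▶< b') = (x̃¹·a)(x̃² b₋₁ · a') ▶< x̃³ b₀ b'`, built from the
`H`-action `actA` and multiplication `mulA` on `A`, the coaction `lam` on `B`
and the (inverse) reassociator `phiInv` of the comodule algebra `B`. -/
def smashMul (mulA : A →ₗ[k] A →ₗ[k] A) (actA : H →ₗ[k] A →ₗ[k] A)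
    (lam : B →ₗ[k] H ⊗[k] B) (phiInv : H ⊗[k] (H ⊗[k] B)) :
    (A ⊗[k] B) →ₗ[k] (A ⊗[k] B) →ₗ[k] (A ⊗[k] B) :=
  let aAct : H ⊗[k] A →ₗ[k] A := TensorProduct.lift actA
  let mA : A ⊗[k] A →ₗ[k] A := TensorProduct.lift mulA
  let mH : H ⊗[k] H →ₗ[k] H := LinearMap.mul' k H
  let mB : B ⊗[k] B →ₗ[k] B := LinearMap.mul' k B
  let f : ((H ⊗[k] A) ⊗[k] ((H ⊗[k] H) ⊗[k] A)) →ₗ[k] A :=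
    mA ∘ₗ TensorProduct.map aAct (aAct ∘ₗ TensorProduct.map mH LinearMap.id)
  let g : (B ⊗[k] (B ⊗[k] B)) →ₗ[k] B := mB ∘ₗ TensorProduct.map LinearMap.id mB
  let r : (B ⊗[k] ((H ⊗[k] B) ⊗[k] B)) →ₗ[k] (H ⊗[k] (B ⊗[k] (B ⊗[k] B))) :=
    (TensorProduct.assoc k H B (B ⊗[k] B)).toLinearMap
      ∘ₗ TensorProduct.map (TensorProduct.comm k B H).toLinearMap LinearMap.id
      ∘ₗ (TensorProduct.assoc k B H (B ⊗[k] B)).symm.toLinearMap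
      ∘ₗ TensorProduct.map LinearMap.id (TensorProduct.assoc k H B B).toLinearMap
  let j2 : ((H ⊗[k] A) ⊗[k] H) →ₗ[k] ((H ⊗[k] H) ⊗[k] A) :=
    (TensorProduct.assoc k H H A).symm.toLinearMap
      ∘ₗ TensorProduct.map LinearMap.id (TensorProduct.comm k A H).toLinearMap
      ∘ₗ (TensorProduct.assoc k H A H).toLinearMap
  let j : (((H ⊗[k] A) ⊗[k] (H ⊗[k] A)) ⊗[k] H) →ₗ[k]
      ((H ⊗[k] A) ⊗[k] ((H ⊗[k] H) ⊗[k] A)) :=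
    TensorProduct.map LinearMap.id j2
      ∘ₗ (TensorProduct.assoc k (H ⊗[k] A) (H ⊗[k] A) H).toLinearMap
  let σ : ((H ⊗[k] (H ⊗[k] B)) ⊗[k] ((A ⊗[k] (H ⊗[k] B)) ⊗[k] (A ⊗[k] B))) →ₗ[k]
      (((H ⊗[k] A) ⊗[k] ((H ⊗[k] H) ⊗[k] A)) ⊗[k] (B ⊗[k] (B ⊗[k] B))) :=
    TensorProduct.map j LinearMap.id
      ∘ₗ (TensorProduct.assoc k ((H ⊗[k] A) ⊗[k] (H ⊗[k] A)) H
            (B ⊗[k] (B ⊗[k] B))).symm.toLinearMap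
      ∘ₗ TensorProduct.map (TensorProduct.tensorTensorTensorComm k H H A A).toLinearMap r
      ∘ₗ (TensorProduct.tensorTensorTensorComm k (H ⊗[k] H) B (A ⊗[k] A)
            ((H ⊗[k] B) ⊗[k] B)).toLinearMap
      ∘ₗ TensorProduct.map (TensorProduct.assoc k H H B).symm.toLinearMap
          (TensorProduct.tensorTensorTensorComm k A (H ⊗[k] B) A B).toLinearMap
  let pre : ((A ⊗[k] B) ⊗[k] (A ⊗[k] B)) →ₗ[k]
      ((A ⊗[k] (H ⊗[k] B)) ⊗[k] (A ⊗[k] B)) :=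
    TensorProduct.map (TensorProduct.map LinearMap.id lam) LinearMap.id
  (TensorProduct.lift.equiv (RingHom.id k) (A ⊗[k] B) (A ⊗[k] B) (A ⊗[k] B)).symm
    (TensorProduct.map f g ∘ₗ σ
      ∘ₗ TensorProduct.mk k (H ⊗[k] (H ⊗[k] B)) _ phiInv ∘ₗ pre)

end Smash



section TwistAux

variable {k : Type} [Field k] {H : Type} [Ring H] [Algebra k H]

open Algebra.TensorProduct

/-- Conjugation by a unit, as an algebra hom. -/
def conjA {A : Type} [Ring A] [Algebra k A] (u ui : A) (hu : u * ui = 1) (hui : ui * u = 1) :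
    A →ₐ[k] A where
  toFun x := u * x * ui
  map_one' := by show u * 1 * ui = 1; rw [mul_one, hu]
  map_mul' x y := by
    have h : ui * (u * (y * ui)) = y * ui := by rw [← mul_assoc, hui, one_mul]
    simp only [mul_assoc, h]
  map_zero' := by simp
  map_add' x y := by simp [mul_add, add_mul]
  commutes' r := by
    show u * algebraMap k A r * ui = algebraMap k A r
    rw [mul_assoc, Algebra.commutes r ui, ← mul_assoc, hu, one_mul]

variable (Q : QuasiBialgebra k H)

def tw_i12 : H ⊗[k] H →ₐ[k] H ⊗[k] (H ⊗[k] H) :=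
  Algebra.TensorProduct.map (AlgHom.id k H) Algebra.TensorProduct.includeLeft

def tw_i23 : H ⊗[k] H →ₐ[k] H ⊗[k] (H ⊗[k] H) :=
  Algebra.TensorProduct.includeRight

def tw_D1 : H ⊗[k] H →ₐ[k] H ⊗[k] (H ⊗[k] H) :=
  (Algebra.TensorProduct.assoc k k k H H H).toAlgHom.comp
    (Algebra.TensorProduct.map Q.comul (AlgHom.id k H))

def tw_D2 : H ⊗[k] H →ₐ[k] H ⊗[k] (H ⊗[k] H) :=
  Algebra.TensorProduct.map (AlgHom.id k H) Q.comul

def tw_E1 : H ⊗[k] (H ⊗[k] H) →ₐ[k] H ⊗[k] (H ⊗[k] (H ⊗[k] H)) :=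
  (Algebra.TensorProduct.assoc k k k H H (H ⊗[k] H)).toAlgHom.comp
    (Algebra.TensorProduct.map Q.comul (AlgHom.id k (H ⊗[k] H)))

def tw_E2 : H ⊗[k] (H ⊗[k] H) →ₐ[k] H ⊗[k] (H ⊗[k] (H ⊗[k] H)) :=
  Algebra.TensorProduct.map (AlgHom.id k H) (tw_D1 Q)

def tw_E3 : H ⊗[k] (H ⊗[k] H) →ₐ[k] H ⊗[k] (H ⊗[k] (H ⊗[k] H)) :=
  Algebra.TensorProduct.map (AlgHom.id k H) (tw_D2 Q)

def tw_j123 : H ⊗[k] (H ⊗[k] H) →ₐ[k] H ⊗[k] (H ⊗[k] (H ⊗[k] H)) :=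
  Algebra.TensorProduct.map (AlgHom.id k H) tw_i12

def tw_j234 : H ⊗[k] (H ⊗[k] H) →ₐ[k] H ⊗[k] (H ⊗[k] (H ⊗[k] H)) :=
  Algebra.TensorProduct.includeRight

section PointwiseLemmas

lemma tw_B1 (u : H ⊗[k] H) :
    (Algebra.TensorProduct.assoc k k k H H H) (u ⊗ₜ (1 : H)) = tw_i12 u := by
  induction u using TensorProduct.induction_on with
  | zero => simp
  | tmul a b => simp [tw_i12]
  | add x y hx hy => simp [TensorProduct.add_tmul, hx, hy]

lemma tw_B2 (u : H ⊗[k] H) :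
    (Algebra.TensorProduct.assoc k k k H H (H ⊗[k] H)) (u ⊗ₜ (1 : H ⊗[k] H)) =
      tw_j123 (tw_i12 u) := by
  induction u using TensorProduct.induction_on with
  | zero => simp
  | tmul a b => simp [tw_i12, tw_j123, Algebra.TensorProduct.one_def]
  | add x y hx hy => simp [TensorProduct.add_tmul, hx, hy]

lemma tw_B3 (v : H ⊗[k] (H ⊗[k] H)) :
    (Algebra.TensorProduct.map (AlgHom.id k H)
        (Algebra.TensorProduct.assoc k k k H H H).toAlgHom)
      ((Algebra.TensorProduct.assoc k k k H (H ⊗[k] H) H) (v ⊗ₜ (1 : H))) = tw_j123 v := by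
  induction v using TensorProduct.induction_on with
  | zero => simp
  | tmul a u =>
      simp only [Algebra.TensorProduct.assoc_tmul, Algebra.TensorProduct.map_tmul,
        AlgHom.coe_id, id_eq, AlgEquiv.coe_toAlgHom, tw_j123]
      rw [tw_B1]
  | add x y hx hy => simp only [TensorProduct.add_tmul, map_add, hx, hy]

lemma tw_C0 (x : H ⊗[k] H) : tw_j123 (tw_i23 x) = tw_j234 (tw_i12 x) := by
  simp [tw_j123, tw_i23, tw_j234, Algebra.TensorProduct.includeRight_apply]

lemma tw_C1 (x : H ⊗[k] H) : tw_E2 Q (tw_i12 x) = tw_j123 (tw_D2 Q x) := by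
  induction x using TensorProduct.induction_on with
  | zero => simp
  | tmul a b =>
      simp only [tw_i12, tw_E2, tw_j123, tw_D2, Algebra.TensorProduct.map_tmul,
        AlgHom.coe_id, id_eq, Algebra.TensorProduct.includeLeft_apply]
      congr 1
      rw [tw_D1]
      simp only [AlgHom.coe_comp, Function.comp_apply, Algebra.TensorProduct.map_tmul,
        AlgHom.coe_id, id_eq, AlgEquiv.coe_toAlgHom]
      rw [tw_B1]; rfl
  | add x y hx hy => simp [hx, hy]

lemma tw_C2 (x : H ⊗[k] H) : tw_E2 Q (tw_i23 x) = tw_j234 (tw_D1 Q x) := by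
  simp [tw_E2, tw_i23, tw_j234]

lemma tw_C4 (x : H ⊗[k] H) : tw_E1 Q (tw_i12 x) = tw_j123 (tw_D1 Q x) := by
  induction x using TensorProduct.induction_on with
  | zero => simp
  | tmul a b =>
      simp only [tw_i12, tw_E1, tw_D1, Algebra.TensorProduct.map_tmul, AlgHom.coe_id,
        id_eq, Algebra.TensorProduct.includeLeft_apply, AlgHom.coe_comp,
        Function.comp_apply, AlgEquiv.coe_toAlgHom]
      induction (Q.comul a) using TensorProduct.induction_on with
      | zero => simp
      | tmul p q => simp [tw_j123, tw_i12]
      | add x y hx hy => simp [TensorProduct.add_tmul, hx, hy]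
  | add x y hx hy => simp [hx, hy]

lemma tw_C5 (x : H ⊗[k] H) : tw_E1 Q (tw_i23 x) = tw_j234 (tw_i23 x) := by
  simp [tw_E1, tw_i23, tw_j234, Algebra.TensorProduct.one_def]

lemma tw_C6 (x : H ⊗[k] H) : tw_E1 Q (tw_D2 Q x) = tw_E3 Q (tw_D1 Q x) := by
  induction x using TensorProduct.induction_on with
  | zero => simp
  | tmul a b =>
      simp only [tw_D2, tw_E1, tw_D1, tw_E3, Algebra.TensorProduct.map_tmul, AlgHom.coe_id,
        id_eq, AlgHom.coe_comp, Function.comp_apply, AlgEquiv.coe_toAlgHom]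
      induction (Q.comul a) using TensorProduct.induction_on with
      | zero => simp
      | tmul p q => simp
      | add x y hx hy => simp [TensorProduct.add_tmul, hx, hy]
  | add x y hx hy => simp [hx, hy]

lemma tw_C7 (x : H ⊗[k] H) : tw_E3 Q (tw_i23 x) = tw_j234 (tw_D2 Q x) := by
  simp [tw_E3, tw_i23, tw_j234]

lemma tw_C8 (x : H ⊗[k] H) : tw_E3 Q (tw_i12 x) = tw_j123 (tw_i12 x) := by
  induction x using TensorProduct.induction_on with
  | zero => simp
  | tmul a b =>
      simp [tw_E3, tw_i12, tw_j123, tw_D2, Algebra.TensorProduct.one_def]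
  | add x y hx hy => simp [hx, hy]

end PointwiseLemmas
end TwistAux

section TwistAux2
set_option maxHeartbeats 1000000
set_option synthInstance.maxHeartbeats 400000

variable {k : Type} [Field k] {H : Type} [Ring H] [Algebra k H]
variable (Q : QuasiBialgebra k H)


lemma tw4_add_mul (x y z : H ⊗[k] (H ⊗[k] (H ⊗[k] H))) : (x + y) * z = x * z + y * z :=
  @right_distrib _ _ _ (Distrib.rightDistribClass _) x y z

lemma tw4_mul_add (x y z : H ⊗[k] (H ⊗[k] (H ⊗[k] H))) : z * (x + y) = z * x + z * y :=
  @left_distrib _ _ _ (Distrib.leftDistribClass _) z x y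

lemma tw4_mul_assoc (x y z : H ⊗[k] (H ⊗[k] (H ⊗[k] H))) : x * y * z = x * (y * z) :=
  mul_assoc x y z

lemma tw4_zero_mul (x : H ⊗[k] (H ⊗[k] (H ⊗[k] H))) : (0 : H ⊗[k] (H ⊗[k] (H ⊗[k] H))) * x = 0 :=
  zero_mul x

lemma tw4_mul_zero (x : H ⊗[k] (H ⊗[k] (H ⊗[k] H))) : x * (0 : H ⊗[k] (H ⊗[k] (H ⊗[k] H))) = 0 :=
  mul_zero x

/-- the element `1 ⊗ 1 ⊗ 1 ⊗ b` of the fourfold tensor product -/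
def tw_d4 (b : H) : H ⊗[k] (H ⊗[k] (H ⊗[k] H)) :=
  (1 : H) ⊗ₜ ((1 : H) ⊗ₜ ((1 : H) ⊗ₜ b))

lemma tw_qc_comm (h : H) :
    Q.Phi * tw_D1 Q (Q.comul h) = tw_D2 Q (Q.comul h) * Q.Phi := by
  have hq := Q.quasi_coassoc h
  have h1 : tw_D2 Q (Q.comul h) =
      Q.Phi * tw_D1 Q (Q.comul h) * Q.PhiInv := by
    simpa [tw_D1, tw_D2] using hq
  rw [h1, mul_assoc, Q.inv_Phi_mul, mul_one]

lemma tw_S0 (w : H ⊗[k] H) (b : H) :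
    tw_i12 w * ((1 : H) ⊗ₜ[k] ((1 : H) ⊗ₜ[k] b)) = (Algebra.TensorProduct.assoc k k k H H H) (w ⊗ₜ b) := by
  induction w using TensorProduct.induction_on with
  | zero => simp
  | tmul p q => simp [tw_i12, Algebra.TensorProduct.tmul_mul_tmul]
  | add x y hx hy => simp [TensorProduct.add_tmul, add_mul, hx, hy]

lemma tw_S1 (u : H ⊗[k] H) (b : H) :
    tw_E2 Q ((Algebra.TensorProduct.assoc k k k H H H) (u ⊗ₜ b))
      = tw_j123 (tw_D2 Q u) * tw_d4 b := by
  induction u using TensorProduct.induction_on with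
  | zero => simp only [map_zero, TensorProduct.zero_tmul, tw4_zero_mul, tw4_mul_zero, map_zero]
  | tmul x y =>
      simp only [Algebra.TensorProduct.assoc_tmul, tw_E2, tw_D2, tw_j123,
        Algebra.TensorProduct.map_tmul, AlgHom.coe_id, id_eq, tw_d4,
        Algebra.TensorProduct.tmul_mul_tmul, mul_one]
      rw [tw_S0]
      simp [tw_D1]
  | add x y hx hy => simp only [map_zero, TensorProduct.zero_tmul, TensorProduct.add_tmul, map_add, hx, hy, tw4_add_mul, tw4_mul_add, tw4_zero_mul, tw4_mul_zero]

lemma tw_S2a (w : H ⊗[k] H) (y b : H) :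
    (Algebra.TensorProduct.assoc k k k H H (H ⊗[k] H)) (w ⊗ₜ (y ⊗ₜ b))
      = tw_j123 ((Algebra.TensorProduct.assoc k k k H H H) (w ⊗ₜ y)) * tw_d4 b := by
  induction w using TensorProduct.induction_on with
  | zero => simp only [map_zero, TensorProduct.zero_tmul, tw4_zero_mul, tw4_mul_zero, map_zero]
  | tmul p q =>
      simp [tw_j123, tw_i12, tw_d4, Algebra.TensorProduct.tmul_mul_tmul]
  | add x y hx hy => simp only [map_zero, TensorProduct.zero_tmul, TensorProduct.add_tmul, map_add, hx, hy, tw4_add_mul, tw4_mul_add, tw4_zero_mul, tw4_mul_zero]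

lemma tw_S2 (u : H ⊗[k] H) (b : H) :
    tw_E1 Q ((Algebra.TensorProduct.assoc k k k H H H) (u ⊗ₜ b))
      = tw_j123 (tw_D1 Q u) * tw_d4 b := by
  induction u using TensorProduct.induction_on with
  | zero => simp only [map_zero, TensorProduct.zero_tmul, tw4_zero_mul, tw4_mul_zero, map_zero]
  | tmul x y =>
      simp only [Algebra.TensorProduct.assoc_tmul, tw_E1, tw_D1, AlgHom.coe_comp,
        Function.comp_apply, Algebra.TensorProduct.map_tmul, AlgHom.coe_id, id_eq,
        AlgEquiv.coe_toAlgHom]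
      rw [tw_S2a]
  | add x y hx hy => simp only [map_zero, TensorProduct.zero_tmul, TensorProduct.add_tmul, map_add, hx, hy, tw4_add_mul, tw4_mul_add, tw4_zero_mul, tw4_mul_zero]

lemma tw_S3a (u : H ⊗[k] H) (b : H) :
    tw_i12 u * ((1 : H) ⊗ₜ[k] ((1 : H) ⊗ₜ[k] b))
      = ((1 : H) ⊗ₜ[k] ((1 : H) ⊗ₜ[k] b)) * tw_i12 u := by
  induction u using TensorProduct.induction_on with
  | zero => simp
  | tmul q r => simp [tw_i12, Algebra.TensorProduct.tmul_mul_tmul]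
  | add x y hx hy => simp [add_mul, mul_add, hx, hy]

lemma tw_S3 (v : H ⊗[k] (H ⊗[k] H)) (b : H) :
    tw_j123 v * tw_d4 b = tw_d4 b * tw_j123 v := by
  induction v using TensorProduct.induction_on with
  | zero => simp only [map_zero, tw4_zero_mul, tw4_mul_zero]
  | tmul a u =>
      simp only [tw_j123, Algebra.TensorProduct.map_tmul, AlgHom.coe_id, id_eq, tw_d4,
        Algebra.TensorProduct.tmul_mul_tmul, mul_one, one_mul]
      rw [tw_S3a]
  | add x y hx hy => simp only [map_zero, TensorProduct.zero_tmul, TensorProduct.add_tmul, map_add, hx, hy, tw4_add_mul, tw4_mul_add, tw4_zero_mul, tw4_mul_zero]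

lemma tw_C3' (x : H ⊗[k] H) :
    tw_j234 Q.Phi * tw_E2 Q (tw_D2 Q x) = tw_E3 Q (tw_D2 Q x) * tw_j234 Q.Phi := by
  induction x using TensorProduct.induction_on with
  | zero => simp only [map_zero, TensorProduct.zero_tmul, tw4_zero_mul, tw4_mul_zero, map_zero]
  | tmul a b =>
      simp only [tw_D2, tw_E2, tw_E3, tw_j234, Algebra.TensorProduct.map_tmul,
        AlgHom.coe_id, id_eq, Algebra.TensorProduct.includeRight_apply,
        Algebra.TensorProduct.tmul_mul_tmul, one_mul, mul_one]
      rw [tw_qc_comm]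
      rfl
  | add x y hx hy => simp only [map_zero, TensorProduct.zero_tmul, TensorProduct.add_tmul, map_add, hx, hy, tw4_add_mul, tw4_mul_add, tw4_zero_mul, tw4_mul_zero]

lemma tw_C9' (x : H ⊗[k] H) :
    tw_E2 Q (tw_D1 Q x) * tw_j123 Q.Phi = tw_j123 Q.Phi * tw_E1 Q (tw_D1 Q x) := by
  induction x using TensorProduct.induction_on with
  | zero => simp only [map_zero, TensorProduct.zero_tmul, tw4_zero_mul, tw4_mul_zero, map_zero]
  | tmul a b =>
      have hD1 : tw_D1 Q (a ⊗ₜ[k] b) = (Algebra.TensorProduct.assoc k k k H H H) (Q.comul a ⊗ₜ b) := by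
        simp [tw_D1]
      rw [hD1, tw_S1, tw_S2, tw4_mul_assoc, ← tw_S3, ← tw4_mul_assoc, ← map_mul,
        ← tw_qc_comm, map_mul, tw4_mul_assoc]
  | add x y hx hy => simp only [map_zero, TensorProduct.zero_tmul, TensorProduct.add_tmul, map_add, hx, hy, tw4_add_mul, tw4_mul_add, tw4_zero_mul, tw4_mul_zero]

lemma tw_C10 (x y : H ⊗[k] H) :
    tw_j123 (tw_i12 x) * tw_j234 (tw_i23 y) = tw_j234 (tw_i23 y) * tw_j123 (tw_i12 x) := by
  induction x using TensorProduct.induction_on with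
  | zero => simp only [map_zero, TensorProduct.zero_tmul, tw4_zero_mul, tw4_mul_zero, map_zero]
  | tmul a b =>
      induction y using TensorProduct.induction_on with
      | zero => simp only [map_zero, TensorProduct.zero_tmul, tw4_zero_mul, tw4_mul_zero, map_zero]
      | tmul c d =>
          simp [tw_j123, tw_i12, tw_j234, tw_i23,
            Algebra.TensorProduct.tmul_mul_tmul]
      | add x' y' hx hy => simp only [map_add, hx, hy, tw4_add_mul, tw4_mul_add]
  | add x' y' hx hy => simp only [map_add, hx, hy, tw4_add_mul, tw4_mul_add]

section Counit

def tw_psil : H ⊗[k] H →ₐ[k] H :=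
  (Algebra.TensorProduct.lid k H).toAlgHom.comp
    (Algebra.TensorProduct.map Q.counit (AlgHom.id k H))

def tw_psir : H ⊗[k] H →ₐ[k] H :=
  (Algebra.TensorProduct.rid k k H).toAlgHom.comp
    (Algebra.TensorProduct.map (AlgHom.id k H) Q.counit)

lemma tw_psil_comul (h : H) : tw_psil Q (Q.comul h) = h := by
  simpa [tw_psil] using Q.counit_left h

lemma tw_psir_comul (h : H) : tw_psir Q (Q.comul h) = h := by
  simpa [tw_psir] using Q.counit_right h

lemma tw_N4a (w : H ⊗[k] H) (b : H) :
    Algebra.TensorProduct.map (AlgHom.id k H) (tw_psil Q)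
        ((Algebra.TensorProduct.assoc k k k H H H) (w ⊗ₜ b))
      = (tw_psir Q w) ⊗ₜ b := by
  induction w using TensorProduct.induction_on with
  | zero => simp
  | tmul p q =>
      simp [tw_psil, tw_psir, TensorProduct.smul_tmul]
  | add x y hx hy => simp [TensorProduct.add_tmul, hx, hy]

lemma tw_N2 (u : H ⊗[k] H) :
    Algebra.TensorProduct.map (AlgHom.id k H) (tw_psil Q) (tw_D2 Q u) = u := by
  induction u using TensorProduct.induction_on with
  | zero => simp
  | tmul a b => simp [tw_D2, tw_psil_comul]
  | add x y hx hy => simp [hx, hy]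

lemma tw_N4 (u : H ⊗[k] H) :
    Algebra.TensorProduct.map (AlgHom.id k H) (tw_psil Q) (tw_D1 Q u) = u := by
  induction u using TensorProduct.induction_on with
  | zero => simp
  | tmul a b =>
      have hD1 : tw_D1 Q (a ⊗ₜ[k] b) = (Algebra.TensorProduct.assoc k k k H H H) (Q.comul a ⊗ₜ b) := by
        simp [tw_D1]
      rw [hD1, tw_N4a, tw_psir_comul]
  | add x y hx hy => simp [hx, hy]

lemma tw_N5 (u : H ⊗[k] H) :
    Algebra.TensorProduct.map (AlgHom.id k H) (tw_psil Q) (tw_i12 u)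
      = (tw_psir Q u) ⊗ₜ (1 : H) := by
  induction u using TensorProduct.induction_on with
  | zero => simp
  | tmul a b =>
      simp [tw_i12, tw_psil, tw_psir, TensorProduct.smul_tmul]
  | add x y hx hy => simp [TensorProduct.add_tmul, hx, hy]

lemma tw_N1 (u : H ⊗[k] H) :
    Algebra.TensorProduct.map (AlgHom.id k H) (tw_psil Q) (tw_i23 u)
      = (1 : H) ⊗ₜ (tw_psil Q u) := by
  simp [tw_i23]

end Counit
end TwistAux2

section TwistAux3
set_option maxHeartbeats 1600000
set_option synthInstance.maxHeartbeats 400000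

variable {k : Type} [Field k] {H : Type} [Ring H] [Algebra k H]
variable (Q : QuasiBialgebra k H) (F Finv : H ⊗[k] H)

lemma tw3_mul_assoc (x y z : H ⊗[k] (H ⊗[k] H)) : x * y * z = x * (y * z) :=
  mul_assoc x y z

lemma tw3_cancel {a b : H ⊗[k] (H ⊗[k] H)} (h : a * b = 1) (x : H ⊗[k] (H ⊗[k] H)) :
    a * (b * x) = x := by rw [← tw3_mul_assoc, h]; exact one_mul x

lemma tw3_swap {a b c d : H ⊗[k] (H ⊗[k] H)} (h : a * b = c * d)
    (x : H ⊗[k] (H ⊗[k] H)) : a * (b * x) = c * (d * x) := by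
  rw [← tw3_mul_assoc, h, tw3_mul_assoc]

lemma tw4_cancel {a b : H ⊗[k] (H ⊗[k] (H ⊗[k] H))} (h : a * b = 1)
    (x : H ⊗[k] (H ⊗[k] (H ⊗[k] H))) : a * (b * x) = x := by
  rw [← tw4_mul_assoc, h]; exact one_mul x

lemma tw4_swap {a b c d : H ⊗[k] (H ⊗[k] (H ⊗[k] H))} (h : a * b = c * d)
    (x : H ⊗[k] (H ⊗[k] (H ⊗[k] H))) : a * (b * x) = c * (d * x) := by
  rw [← tw4_mul_assoc, h, tw4_mul_assoc]

lemma tw4_coc {a b c d e : H ⊗[k] (H ⊗[k] (H ⊗[k] H))} (h : a * (b * c) = d * e)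
    (x : H ⊗[k] (H ⊗[k] (H ⊗[k] H))) : a * (b * (c * x)) = d * (e * x) := by
  calc a * (b * (c * x)) = a * (b * c) * x := by rw [tw4_mul_assoc, tw4_mul_assoc]
    _ = d * e * x := by rw [h]
    _ = d * (e * x) := tw4_mul_assoc _ _ _

variable (hF : F * Finv = 1) (hFi : Finv * F = 1)

/-- the twisted comultiplication -/
def tw_comulF : H →ₐ[k] H ⊗[k] H :=
  (conjA F Finv hF hFi).comp Q.comul

lemma tw_comulF_apply (h : H) :
    tw_comulF Q F Finv hF hFi h = F * Q.comul h * Finv := rfl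

lemma tw_TD2 (v : H ⊗[k] H) :
    Algebra.TensorProduct.map (AlgHom.id k H) (tw_comulF Q F Finv hF hFi) v
      = tw_i23 F * tw_D2 Q v * tw_i23 Finv := by
  induction v using TensorProduct.induction_on with
  | zero => simp
  | tmul a b =>
      simp only [Algebra.TensorProduct.map_tmul, AlgHom.coe_id, id_eq, tw_comulF_apply,
        tw_i23, tw_D2, Algebra.TensorProduct.includeRight_apply,
        Algebra.TensorProduct.tmul_mul_tmul, one_mul, mul_one]
  | add x y hx hy => simp [mul_add, add_mul, hx, hy]

lemma tw_TD1 (v : H ⊗[k] H) :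
    (Algebra.TensorProduct.assoc k k k H H H)
        (Algebra.TensorProduct.map (tw_comulF Q F Finv hF hFi) (AlgHom.id k H) v)
      = tw_i12 F * tw_D1 Q v * tw_i12 Finv := by
  induction v using TensorProduct.induction_on with
  | zero => simp
  | tmul a b =>
      have h1 : tw_D1 Q (a ⊗ₜ[k] b)
          = (Algebra.TensorProduct.assoc k k k H H H) (Q.comul a ⊗ₜ b) := by simp [tw_D1]
      rw [h1, ← tw_B1 F, ← tw_B1 Finv, ← map_mul, ← map_mul]
      simp only [Algebra.TensorProduct.map_tmul, AlgHom.coe_id, id_eq, tw_comulF_apply,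
        Algebra.TensorProduct.tmul_mul_tmul, one_mul, mul_one]
  | add x y hx hy => simp [mul_add, add_mul, hx, hy]

lemma tw_TE3 (v : H ⊗[k] (H ⊗[k] H)) :
    Algebra.TensorProduct.map (AlgHom.id k H)
        (Algebra.TensorProduct.map (AlgHom.id k H) (tw_comulF Q F Finv hF hFi)) v
      = tw_j234 (tw_i23 F) * tw_E3 Q v * tw_j234 (tw_i23 Finv) := by
  induction v using TensorProduct.induction_on with
  | zero => simp only [map_zero, tw4_zero_mul, tw4_mul_zero]
  | tmul a u =>
      simp only [Algebra.TensorProduct.map_tmul, AlgHom.coe_id, id_eq, tw_TD2,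
        tw_E3, tw_j234, Algebra.TensorProduct.includeRight_apply,
        Algebra.TensorProduct.tmul_mul_tmul, one_mul, mul_one]
  | add x y hx hy => simp only [map_add, hx, hy, tw4_add_mul, tw4_mul_add]

lemma tw_TE2 (v : H ⊗[k] (H ⊗[k] H)) :
    Algebra.TensorProduct.map (AlgHom.id k H)
        ((Algebra.TensorProduct.assoc k k k H H H).toAlgHom.comp
          (Algebra.TensorProduct.map (tw_comulF Q F Finv hF hFi) (AlgHom.id k H))) v
      = tw_j234 (tw_i12 F) * tw_E2 Q v * tw_j234 (tw_i12 Finv) := by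
  induction v using TensorProduct.induction_on with
  | zero => simp only [map_zero, tw4_zero_mul, tw4_mul_zero]
  | tmul a u =>
      simp only [Algebra.TensorProduct.map_tmul, AlgHom.coe_id, id_eq, AlgHom.coe_comp,
        Function.comp_apply, AlgEquiv.coe_toAlgHom,
        tw_TD1 Q F Finv hF hFi u, tw_E2, tw_j234,
        Algebra.TensorProduct.includeRight_apply,
        Algebra.TensorProduct.tmul_mul_tmul, one_mul, mul_one]
  | add x y hx hy => simp only [map_add, hx, hy, tw4_add_mul, tw4_mul_add]

lemma tw_TE1 (v : H ⊗[k] (H ⊗[k] H)) :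
    (Algebra.TensorProduct.assoc k k k H H (H ⊗[k] H))
        (Algebra.TensorProduct.map (tw_comulF Q F Finv hF hFi)
          (AlgHom.id k (H ⊗[k] H)) v)
      = tw_j123 (tw_i12 F) * tw_E1 Q v * tw_j123 (tw_i12 Finv) := by
  induction v using TensorProduct.induction_on with
  | zero => simp only [map_zero, tw4_zero_mul, tw4_mul_zero]
  | tmul a u =>
      have h1 : tw_E1 Q (a ⊗ₜ[k] u)
          = (Algebra.TensorProduct.assoc k k k H H (H ⊗[k] H)) (Q.comul a ⊗ₜ u) := by
        simp [tw_E1]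
      rw [h1, ← tw_B2 F, ← tw_B2 Finv, ← map_mul, ← map_mul]
      simp only [Algebra.TensorProduct.map_tmul, AlgHom.coe_id, id_eq, tw_comulF_apply,
        Algebra.TensorProduct.tmul_mul_tmul, one_mul, mul_one]
  | add x y hx hy => simp only [map_add, hx, hy, tw4_add_mul, tw4_mul_add]

lemma tw_qc (h : H) :
    tw_D2 Q (Q.comul h) = Q.Phi * tw_D1 Q (Q.comul h) * Q.PhiInv := by
  simpa [tw_D1, tw_D2] using Q.quasi_coassoc h

lemma tw_cocycle4 :
    tw_j234 Q.Phi * (tw_E2 Q Q.Phi * tw_j123 Q.Phi)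
      = tw_E3 Q Q.Phi * tw_E1 Q Q.Phi := by
  have hc := Q.cocycle
  rw [tw_B3] at hc
  calc tw_j234 Q.Phi * (tw_E2 Q Q.Phi * tw_j123 Q.Phi)
      = tw_j234 Q.Phi * tw_E2 Q Q.Phi * tw_j123 Q.Phi := (tw4_mul_assoc _ _ _).symm
    _ = tw_E3 Q Q.Phi * tw_E1 Q Q.Phi := by
        simpa [tw_j234, tw_E2, tw_D1, tw_D2, tw_E3, tw_E1, tw_j123] using hc

end TwistAux3



set_option synthInstance.maxHeartbeats 400000 in
/-- twisting a quasi-bialgebra by a gauge transformation `F`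
again yields a quasi-bialgebra, with `Δ_F(h) = F Δ(h) F⁻¹` and
`Φ_F = (1⊗F)(id⊗Δ)(F) Φ (Δ⊗id)(F⁻¹)(F⁻¹⊗1)`. -/
theorem twist_quasiBialgebra
    {k : Type} [Field k] {H : Type} [Ring H] [Algebra k H]
    (Q : QuasiBialgebra k H) (F Finv : H ⊗[k] H)
    (hF : F * Finv = 1) (hFi : Finv * F = 1)
    (hcl : (Algebra.TensorProduct.lid k H)
        (Algebra.TensorProduct.map Q.counit (AlgHom.id k H) F) = 1)
    (hcr : (Algebra.TensorProduct.rid k k H)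
        (Algebra.TensorProduct.map (AlgHom.id k H) Q.counit F) = 1) :
    ∃ Q' : QuasiBialgebra k H,
      Q'.counit = Q.counit ∧
      (∀ h : H, Q'.comul h = F * Q.comul h * Finv) ∧
      Q'.Phi =
        (Algebra.TensorProduct.includeRight (R := k) (A := H) (B := H ⊗[k] H) F)
          * (Algebra.TensorProduct.map (AlgHom.id k H) Q.comul F)
          * Q.Phi
          * ((Algebra.TensorProduct.assoc k k k H H H)
              (Algebra.TensorProduct.map Q.comul (AlgHom.id k H) Finv))
          * ((Algebra.TensorProduct.assoc k k k H H H) (Finv ⊗ₜ[k] (1 : H))) := by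
  -- counit facts
  have psilF : tw_psil Q F = 1 := by simpa [tw_psil] using hcl
  have psirF : tw_psir Q F = 1 := by simpa [tw_psir] using hcr
  have psilFi : tw_psil Q Finv = 1 := by
    have h2 : tw_psil Q F * tw_psil Q Finv = 1 := by rw [← map_mul, hF, map_one]
    rwa [psilF, one_mul] at h2
  have psirFi : tw_psir Q Finv = 1 := by
    have h2 : tw_psir Q F * tw_psir Q Finv = 1 := by rw [← map_mul, hF, map_one]
    rwa [psirF, one_mul] at h2
  -- cancellation facts in the threefold tensor product
  have ci23 : tw_i23 (k := k) (H := H) F * tw_i23 Finv = 1 := by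
    rw [← map_mul, hF, map_one]
  have ci23' : tw_i23 (k := k) (H := H) Finv * tw_i23 F = 1 := by
    rw [← map_mul, hFi, map_one]
  have ci12 : tw_i12 (k := k) (H := H) F * tw_i12 Finv = 1 := by
    rw [← map_mul, hF, map_one]
  have ci12' : tw_i12 (k := k) (H := H) Finv * tw_i12 F = 1 := by
    rw [← map_mul, hFi, map_one]
  have cD1 : tw_D1 Q F * tw_D1 Q Finv = 1 := by rw [← map_mul, hF, map_one]
  have cD1' : tw_D1 Q Finv * tw_D1 Q F = 1 := by rw [← map_mul, hFi, map_one]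
  have cD2 : tw_D2 Q F * tw_D2 Q Finv = 1 := by rw [← map_mul, hF, map_one]
  have cD2' : tw_D2 Q Finv * tw_D2 Q F = 1 := by rw [← map_mul, hFi, map_one]
  -- cancellation facts in the fourfold tensor product
  have c4d : tw_j234 (tw_i12 (k := k) (H := H) Finv) * tw_j234 (tw_i12 F) = 1 := by
    rw [← map_mul, ← map_mul, hFi, map_one]; exact (tw_j234 (k := k) (H := H)).map_one'
  have c4c : tw_j234 (tw_D1 Q Finv) * tw_j234 (tw_D1 Q F) = 1 := by
    rw [← map_mul, ← map_mul, hFi, map_one]; exact (tw_j234 (k := k) (H := H)).map_one'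
  have c4fI : tw_j123 (tw_D2 Q Finv) * tw_j123 (tw_D2 Q F) = 1 := by
    rw [← map_mul, ← map_mul, hFi, map_one]; exact (tw_j123 (k := k) (H := H)).map_one'
  have c4hI : tw_j123 (tw_i12 (k := k) (H := H) Finv) * tw_j123 (tw_i12 F) = 1 := by
    rw [← map_mul, ← map_mul, hFi, map_one]; exact (tw_j123 (k := k) (H := H)).map_one'
  have c4ai : tw_j234 (tw_i23 (k := k) (H := H) Finv) * tw_j234 (tw_i23 F) = 1 := by
    rw [← map_mul, ← map_mul, hFi, map_one]; exact (tw_j234 (k := k) (H := H)).map_one'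
  have c4E3 : tw_E3 Q (tw_D1 Q Finv) * tw_E3 Q (tw_D1 Q F) = 1 := by
    rw [← map_mul, ← map_mul, hFi, map_one]; exact (tw_E3 Q).map_one'
  have comm4 : tw_j123 (tw_i12 (k := k) (H := H) Finv) * tw_j234 (tw_i23 Finv)
      = tw_j234 (tw_i23 Finv) * tw_j123 (tw_i12 Finv) := tw_C10 Finv Finv
  -- the twisted structure Phi in hom form
  have hP :
      (Algebra.TensorProduct.includeRight (R := k) (A := H) (B := H ⊗[k] H) F)
          * (Algebra.TensorProduct.map (AlgHom.id k H) Q.comul F)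
          * Q.Phi
          * ((Algebra.TensorProduct.assoc k k k H H H)
              (Algebra.TensorProduct.map Q.comul (AlgHom.id k H) Finv))
          * ((Algebra.TensorProduct.assoc k k k H H H) (Finv ⊗ₜ[k] (1 : H)))
        = tw_i23 F * tw_D2 Q F * Q.Phi * tw_D1 Q Finv * tw_i12 Finv := by
    rw [tw_B1]
    rfl
  refine ⟨⟨tw_comulF Q F Finv hF hFi, Q.counit,
    (Algebra.TensorProduct.includeRight (R := k) (A := H) (B := H ⊗[k] H) F)
        * (Algebra.TensorProduct.map (AlgHom.id k H) Q.comul F)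
        * Q.Phi
        * ((Algebra.TensorProduct.assoc k k k H H H)
            (Algebra.TensorProduct.map Q.comul (AlgHom.id k H) Finv))
        * ((Algebra.TensorProduct.assoc k k k H H H) (Finv ⊗ₜ[k] (1 : H))),
    tw_i12 F * tw_D1 Q F * Q.PhiInv * tw_D2 Q Finv * tw_i23 Finv,
    ?_, ?_, ?_, ?_, ?_, ?_, ?_⟩, rfl, fun h => rfl, rfl⟩
  · -- Phi_inv_mul
    rw [hP]
    simp only [tw3_mul_assoc]
    rw [tw3_cancel ci12', tw3_cancel cD1', tw3_cancel Q.Phi_inv_mul,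
      tw3_cancel cD2, ci23]
  · -- inv_Phi_mul
    rw [hP]
    simp only [tw3_mul_assoc]
    rw [tw3_cancel ci23', tw3_cancel cD2', tw3_cancel Q.inv_Phi_mul,
      tw3_cancel cD1, ci12]
  · -- quasi_coassoc
    intro h
    conv_lhs => rw [tw_TD2 Q F Finv hF hFi, tw_comulF_apply, map_mul, map_mul]
    conv_rhs => rw [hP, tw_TD1 Q F Finv hF hFi, tw_comulF_apply, map_mul, map_mul]
    simp only [tw3_mul_assoc]
    rw [tw3_cancel ci12', tw3_cancel cD1', tw3_cancel ci12', tw3_cancel cD1',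
      tw3_swap (tw_qc_comm Q h), tw3_cancel Q.Phi_inv_mul]
  · -- counit_right
    intro h
    show tw_psir Q (tw_comulF Q F Finv hF hFi h) = h
    rw [tw_comulF_apply, map_mul, map_mul, psirF, psirFi, one_mul, mul_one,
      tw_psir_comul]
  · -- counit_left
    intro h
    show tw_psil Q (tw_comulF Q F Finv hF hFi h) = h
    rw [tw_comulF_apply, map_mul, map_mul, psilF, psilFi, one_mul, mul_one,
      tw_psil_comul]
  · -- cocycle
    conv_lhs => rw [tw_B3, tw_TE2 Q F Finv hF hFi]
    conv_rhs => rw [tw_TE3 Q F Finv hF hFi, tw_TE1 Q F Finv hF hFi]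
    rw [hP]
    simp only [map_mul]
    simp only [tw_C1, tw_C2, tw_C4, tw_C5, tw_C6, tw_C7, tw_C8, tw_C0]
    simp only [tw4_mul_assoc]
    rw [show (Algebra.TensorProduct.includeRight (R := k) (A := H)
        (B := H ⊗[k] (H ⊗[k] H))) = (tw_j234 (k := k) (H := H)) from rfl]
    rw [tw4_cancel c4d, tw4_cancel c4d, tw4_cancel c4c, tw4_cancel c4fI,
      tw4_swap (tw_C3' Q F), tw4_swap (tw_C9' Q Finv), tw4_coc (tw_cocycle4 Q),
      tw4_swap comm4, tw4_cancel c4hI, tw4_cancel c4ai, tw4_cancel c4E3]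
  · -- normalized
    show Algebra.TensorProduct.map (AlgHom.id k H) (tw_psil Q)
        ((Algebra.TensorProduct.includeRight (R := k) (A := H) (B := H ⊗[k] H) F)
          * (Algebra.TensorProduct.map (AlgHom.id k H) Q.comul F)
          * Q.Phi
          * ((Algebra.TensorProduct.assoc k k k H H H)
              (Algebra.TensorProduct.map Q.comul (AlgHom.id k H) Finv))
          * ((Algebra.TensorProduct.assoc k k k H H H) (Finv ⊗ₜ[k] (1 : H)))) = 1
    rw [hP, map_mul, map_mul, map_mul, map_mul, tw_N2, tw_N4, tw_N5, psirFi]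
    rw [show Algebra.TensorProduct.map (AlgHom.id k H) (tw_psil Q) (tw_i23 F)
        = (1 : H) ⊗ₜ[k] (tw_psil Q F) from tw_N1 Q F]
    rw [psilF,
      show Algebra.TensorProduct.map (AlgHom.id k H) (tw_psil Q) Q.Phi = 1 from
        Q.normalized,
      ← Algebra.TensorProduct.one_def, one_mul, mul_one, mul_one, hF]

end QuasiHopfPaper
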